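/- Let R = (r_{n,k})_{n,k=0}^N be a lower triangular matrix with all diagonal entries equal to 1. The following are equivalent: (i) R is resolvable, i.e., there exist nonnegative reals λ_{n,k} and monic polynomials R_{n,k} with R_{n,0} equal to the n-th row generating polynomial Σ_k r_{n,k}t^k, R_{n,n} = t^n, t^k | R_{n,k}, and R_{n+1,k} = R_{n+1,k+1} + λ_{n,k}R_{n,k}; (ii) there exist diagonal linear operators α_i on R[t] with α_i(t^k) = α_{i,k}t^k, α_{i,k} ≥ 0, such that Σ_k r_{n,k}t^k = (t+α_1)(t+α_2)···(t+α_n)1; (iii) R is totally nonnegative. -/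

import Mathlib

open Polynomial

/-- The generating polynomial `Rₙ = Σ_k r n k · tᵏ` of the `n`th row. -/
noncomputable def RowPoly (r : ℕ → ℕ → ℝ) (n : ℕ) : ℝ[X] :=
  ∑ k ∈ Finset.range (n + 1), C (r n k) * X ^ k

/-- `r` (restricted to indices `≤ N`) is totally nonnegative: every minor is
nonnegative. -/
def TotallyNonneg (N : ℕ) (r : ℕ → ℕ → ℝ) : Prop :=
  ∀ (m : ℕ) (rows cols : Fin m → ℕ), StrictMono rows → StrictMono cols →
    (∀ i, rows i ≤ N) → (∀ i, cols i ≤ N) →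
    0 ≤ (Matrix.of fun i j => r (rows i) (cols j)).det

/-- `r` is resolvable: there is an array `λ_{n,k} ≥ 0` and an array of monic
polynomials `R_{n,k}` with `R_{n,0} = Rₙ`, `R_{n,n} = tⁿ`, `tᵏ ∣ R_{n,k}`, and
`R_{n+1,k} = R_{n+1,k+1} + λ_{n,k} R_{n,k}`. -/
def Resolvable (N : ℕ) (r : ℕ → ℕ → ℝ) : Prop :=
  ∃ (lam : ℕ → ℕ → ℝ) (Rp : ℕ → ℕ → ℝ[X]),
    (∀ n k, k ≤ n → n < N → 0 ≤ lam n k) ∧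
    (∀ n ≤ N, Rp n 0 = RowPoly r n ∧ Rp n n = X ^ n) ∧
    (∀ n k, k ≤ n → n ≤ N → (Rp n k).Monic ∧ X ^ k ∣ Rp n k) ∧
    (∀ n k, k ≤ n → n + 1 ≤ N → Rp (n + 1) k = Rp (n + 1) (k + 1) + C (lam n k) * Rp n k)

/-- There are diagonal linear operators `αᵢ` with nonnegative entries `α_{i,k}`
(`αᵢ(tᵏ) = α_{i,k} tᵏ`) such that `Rₙ = (t+α₁)(t+α₂)⋯(t+αₙ) 1`.  Here
`Q m k = (t+α₁)⋯(t+α_m) tᵏ`, encoded by the recursion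
`Q (m+1) k = Q m (k+1) + α_{m+1,k} · Q m k` with `Q 0 k = tᵏ`. -/
def OperatorForm (N : ℕ) (r : ℕ → ℕ → ℝ) : Prop :=
  ∃ (α : ℕ → ℕ → ℝ) (Q : ℕ → ℕ → ℝ[X]),
    (∀ i k, 1 ≤ i → i ≤ N → 0 ≤ α i k) ∧
    (∀ k, Q 0 k = X ^ k) ∧
    (∀ m k, Q (m + 1) k = Q m (k + 1) + C (α (m + 1) k) * Q m k) ∧
    (∀ n ≤ N, RowPoly r n = Q n 0)

lemma rowPoly_coeff (r : ℕ → ℕ → ℝ) (n j : ℕ) :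
    (RowPoly r n).coeff j = if j ≤ n then r n j else 0 := by
  rw [RowPoly, Polynomial.finset_sum_coeff]
  simp only [Polynomial.coeff_C_mul, Polynomial.coeff_X_pow]
  by_cases h : j ≤ n
  · rw [if_pos h, Finset.sum_eq_single j]
    · simp
    · intro b _ hb
      simp [Ne.symm hb]
    · intro hj
      exact absurd (Finset.mem_range.mpr (by omega)) hj
  · rw [if_neg h]
    apply Finset.sum_eq_zero
    intro b hb
    rw [Finset.mem_range] at hb
    rw [if_neg (by omega), mul_zero]

lemma tnn_congr {N : ℕ} {A B : ℕ → ℕ → ℝ}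
    (h : ∀ n j, n ≤ N → j ≤ N → A n j = B n j) (hA : TotallyNonneg N A) :
    TotallyNonneg N B := by
  intro m rows cols hr hc hrN hcN
  have := hA m rows cols hr hc hrN hcN
  convert this using 2
  ext i j
  simp only [Matrix.of_apply]
  exact (h _ _ (hrN i) (hcN j)).symm

lemma strictMono_update {m : ℕ} {rows : Fin m → ℕ} (hr : StrictMono rows)
    {i₀ : Fin m} {v : ℕ} (hv : v < rows i₀)
    (hgt : ∀ i, i < i₀ → rows i < v) :
    StrictMono (Function.update rows i₀ v) := by
  intro a b hab
  by_cases ha : a = i₀ <;> by_cases hb : b = i₀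
  · exact absurd (ha.trans hb.symm) (ne_of_lt hab)
  · subst ha
    simp only [Function.update_self, Function.update_of_ne hb]
    exact lt_trans hv (hr hab)
  · subst hb
    simp only [Function.update_self, Function.update_of_ne ha]
    exact hgt a hab
  · simp only [Function.update_of_ne ha, Function.update_of_ne hb]
    exact hr hab

/-- adding `c` times row `m-1` to row `m` preserves total nonnegativity. -/
lemma tnn_elementary {N : ℕ} {A : ℕ → ℕ → ℝ} (hA : TotallyNonneg N A)
    {m : ℕ} (hm : 1 ≤ m) {c : ℝ} (hc : 0 ≤ c) :
    TotallyNonneg N (fun n j => A n j + (if n = m then c * A (m-1) j else 0)) := by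
  intro p rows cols hr hcm hrN hcN
  by_cases hex : ∃ i₀, rows i₀ = m
  · obtain ⟨i₀, hi₀⟩ := hex
    set M₀ : Matrix (Fin p) (Fin p) ℝ := Matrix.of fun i j => A (rows i) (cols j) with hM₀
    have hMeq : (Matrix.of fun i j => A (rows i) (cols j) +
        (if rows i = m then c * A (m-1) (cols j) else 0)) =
        M₀.updateRow i₀ ((fun j => A m (cols j)) + c • (fun j => A (m-1) (cols j))) := by
      ext i j
      by_cases hi : i = i₀
      · subst hi
        simp [Matrix.updateRow_self, hi₀, smul_eq_mul]
      · have : rows i ≠ m := fun h => hi (hr.injective (h.trans hi₀.symm))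
        simp [Matrix.updateRow_ne hi, this, hM₀]
    rw [hMeq]
    have h1 : M₀.updateRow i₀ (fun j => A m (cols j)) = M₀ := by
      rw [← hi₀]; exact Matrix.updateRow_eq_self M₀ i₀
    rw [Matrix.det_updateRow_add, Matrix.det_updateRow_smul, h1]
    have h2 : 0 ≤ M₀.det := hA p rows cols hr hcm hrN hcN
    have h3 : 0 ≤ (M₀.updateRow i₀ fun j => A (m-1) (cols j)).det := by
      by_cases hprev : ∃ i₁, i₁ ≠ i₀ ∧ rows i₁ = m - 1
      · obtain ⟨i₁, hne, hi₁⟩ := hprev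
        have : (M₀.updateRow i₀ fun j => A (m-1) (cols j)) i₁ =
            (M₀.updateRow i₀ fun j => A (m-1) (cols j)) i₀ := by
          ext j
          rw [Matrix.updateRow_ne hne, Matrix.updateRow_self]
          simp [hM₀, hi₁]
        exact le_of_eq (Matrix.det_zero_of_row_eq hne this).symm
      · push_neg at hprev
        have hupd : (M₀.updateRow i₀ fun j => A (m-1) (cols j)) =
            Matrix.of fun i j => A (Function.update rows i₀ (m-1) i) (cols j) := by
          ext i j
          rcases eq_or_ne i i₀ with rfl | hi
          · simp [Matrix.updateRow_self, Function.update_self]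
          · simp [Matrix.updateRow_ne hi, Function.update_of_ne hi, hM₀]
        rw [hupd]
        have hsm : StrictMono (Function.update rows i₀ (m-1)) := by
          apply strictMono_update hr
          · omega
          · intro i hii
            have h5 : rows i < m := hi₀ ▸ hr hii
            have h6 : rows i ≠ m - 1 := fun h => (hprev i (ne_of_lt hii)) h
            omega
        apply hA p _ cols hsm hcm _ hcN
        intro i
        rcases eq_or_ne i i₀ with rfl | hi
        · have := hrN i
          simp only [Function.update_self]; omega
        · simp only [Function.update_of_ne hi]; exact hrN i
    positivity
  · push_neg at hex
    have : (Matrix.of fun i j => A (rows i) (cols j) +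
        (if rows i = m then c * A (m-1) (cols j) else 0)) =
        Matrix.of fun i j => A (rows i) (cols j) := by
      ext i j; simp [hex i]
    rw [this]
    exact hA p rows cols hr hcm hrN hcN

/-- The block matrix `1 ⊕ s` (shifted down-right by one) is TNN. -/
lemma tnn_block {N : ℕ} {s : ℕ → ℕ → ℝ} (hs : TotallyNonneg N s) :
    TotallyNonneg (N + 1) (fun n j =>
      if n = 0 then (if j = 0 then 1 else 0) else
        if j = 0 then 0 else s (n-1) (j-1)) := by
  intro m rows cols hr hc hrN hcN
  match m with
  | 0 => simp [Matrix.det_isEmpty]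
  | p + 1 =>
    by_cases hr0 : rows 0 = 0
    · by_cases hc0 : cols 0 = 0
      · -- expand along row 0
        rw [Matrix.det_succ_row_zero]
        have hcol : ∀ j : Fin (p+1), (Matrix.of fun i j => (fun n j =>
            if n = 0 then (if j = 0 then 1 else 0) else
              if j = 0 then 0 else s (n-1) (j-1)) (rows i) (cols j)) 0 j
            = if j = 0 then 1 else 0 := by
          intro j
          rcases eq_or_ne j 0 with rfl | hj
          · simp [hr0, hc0]
          · have : 0 < cols j := by
              have := hc (show (0:Fin (p+1)) < j by exact Fin.pos_iff_ne_zero.mpr hj)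
              omega
            simp [hr0, hj, Nat.pos_iff_ne_zero.mp this]
        rw [Finset.sum_eq_single 0]
        · rw [hcol 0, if_pos rfl]
          simp only [Fin.val_zero, pow_zero, one_mul, mul_one]
          have hsub : ((Matrix.of fun i j => (fun n j =>
              if n = 0 then (if j = 0 then 1 else 0) else
                if j = 0 then 0 else s (n-1) (j-1)) (rows i) (cols j)).submatrix
              Fin.succ (Fin.succAbove 0)) =
              Matrix.of (fun (i j : Fin p) => s (rows i.succ - 1) (cols j.succ - 1)) := by
            ext i j
            have h1 : rows i.succ ≠ 0 := by
              have := hr (show (0:Fin (p+1)) < i.succ from Fin.succ_pos i)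
              omega
            have h2 : cols j.succ ≠ 0 := by
              have := hc (show (0:Fin (p+1)) < j.succ from Fin.succ_pos j)
              omega
            simp [Matrix.submatrix_apply, Fin.succAbove_zero, h1, h2]
          rw [hsub]
          apply hs p _ _ _ _
          · intro i
            have := hrN i.succ
            have := hr (show (0:Fin (p+1)) < i.succ from Fin.succ_pos i)
            omega
          · intro i
            have := hcN i.succ
            have := hc (show (0:Fin (p+1)) < i.succ from Fin.succ_pos i)
            omega
          · intro a b hab
            have h1 := hr (Fin.succ_lt_succ_iff.mpr hab)
            have h2 := hr (Fin.succ_pos a)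
            show rows a.succ - 1 < rows b.succ - 1
            omega
          · intro a b hab
            have h1 := hc (Fin.succ_lt_succ_iff.mpr hab)
            have h2 := hc (Fin.succ_pos a)
            show cols a.succ - 1 < cols b.succ - 1
            omega
        · intro b _ hb
          rw [hcol b, if_neg hb]
          ring
        · intro h
          exact absurd (Finset.mem_univ 0) h
      · -- row 0 of the minor is zero
        have : ∀ j, (Matrix.of fun i j => (fun n j =>
            if n = 0 then (if j = 0 then 1 else 0) else
              if j = 0 then 0 else s (n-1) (j-1)) (rows i) (cols j)) 0 j = 0 := by
          intro j
          have hcj : cols j ≠ 0 := by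
            rcases eq_or_ne j 0 with rfl | hj
            · exact hc0
            · have := hc (Fin.pos_iff_ne_zero.mpr hj); omega
          simp [hr0, hcj]
        rw [Matrix.det_eq_zero_of_row_eq_zero 0 this]
    · by_cases hc0 : cols 0 = 0
      · -- column 0 of the minor is zero
        have : ∀ i, (Matrix.of fun i j => (fun n j =>
            if n = 0 then (if j = 0 then 1 else 0) else
              if j = 0 then 0 else s (n-1) (j-1)) (rows i) (cols j)) i 0 = 0 := by
          intro i
          have hri : rows i ≠ 0 := by
            rcases eq_or_ne i 0 with rfl | hi
            · exact hr0
            · have := hr (Fin.pos_iff_ne_zero.mpr hi); omega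
          simp [hri, hc0]
        rw [Matrix.det_eq_zero_of_column_eq_zero 0 this]
      · -- all rows and cols positive: direct minor of s
        have hane : ∀ i : Fin (p+1), rows i ≠ 0 := by
          intro i
          rcases eq_or_ne i 0 with rfl | hi
          · exact hr0
          · have := hr (Fin.pos_iff_ne_zero.mpr hi); omega
        have hcne : ∀ i : Fin (p+1), cols i ≠ 0 := by
          intro i
          rcases eq_or_ne i 0 with rfl | hi
          · exact hc0
          · have := hc (Fin.pos_iff_ne_zero.mpr hi); omega
        have heq : (Matrix.of fun i j => (fun n j =>
            if n = 0 then (if j = 0 then 1 else 0) else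
              if j = 0 then 0 else s (n-1) (j-1)) (rows i) (cols j)) =
            Matrix.of fun i j => s (rows i - 1) (cols j - 1) := by
          ext i j
          simp [hane i, hcne j]
        rw [heq]
        apply hs (p+1) _ _ _ _
        · intro i; have := hrN i; have := hane i; omega
        · intro i; have := hcN i; have := hcne i; omega
        · intro a b hab
          have := hr hab; have := hane a
          show rows a - 1 < rows b - 1
          omega
        · intro a b hab
          have := hc hab; have := hcne a
          show cols a - 1 < cols b - 1
          omega

/-- Combined step-up lemma: if `s` is TNN and `r` satisfies the peeling recursion
over `s` with nonnegative coefficients `c`, then `r` is TNN. -/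
lemma tnn_step {N : ℕ} {s : ℕ → ℕ → ℝ} {r : ℕ → ℕ → ℝ} {c : ℕ → ℝ}
    (hs : TotallyNonneg N s)
    (hc : ∀ n, 1 ≤ n → n ≤ N + 1 → 0 ≤ c n)
    (hr0 : r 0 0 = 1) (hr0' : ∀ j, 1 ≤ j → r 0 j = 0)
    (hrec : ∀ n j, 1 ≤ n → n ≤ N + 1 → j ≤ N + 1 →
      r n j = (if j = 0 then 0 else s (n-1) (j-1)) + c n * r (n-1) j) :
    TotallyNonneg (N + 1) r := by
  set P : ℕ → ℕ → ℝ := fun n j =>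
    if n = 0 then (if j = 0 then 1 else 0) else
      if j = 0 then 0 else s (n-1) (j-1) with hP
  have hPtnn : TotallyNonneg (N+1) P := tnn_block hs
  -- K m : the matrix after m cascade steps
  have key : ∀ m, m ≤ N + 1 → TotallyNonneg (N+1)
      (fun n j => if n ≤ m then r n j else P n j) := by
    intro m
    induction m with
    | zero =>
      intro _
      apply tnn_congr _ hPtnn
      intro n j hn hj
      rcases Nat.eq_zero_or_pos n with rfl | hnpos
      · simp only [Nat.le_refl, if_pos, hP]
        rcases Nat.eq_zero_or_pos j with rfl | hjpos
        · simp [hr0]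
        · simp [hr0' j hjpos, Nat.pos_iff_ne_zero.mp hjpos]
      · simp [Nat.pos_iff_ne_zero.mp hnpos, Nat.not_succ_le_zero, hP]
    | succ m ih =>
      intro hm
      have ihm := ih (by omega)
      have helem := tnn_elementary ihm (show 1 ≤ m + 1 by omega)
        (hc (m+1) (by omega) hm)
      apply tnn_congr _ helem
      intro n j hn hj
      rcases Nat.lt_trichotomy n (m+1) with h | h | h
      · have h1 : n ≤ m := by omega
        simp [h1, Nat.le_of_lt h, if_neg (by omega : n ≠ m + 1)]
      · subst h
        have h1 : ¬ (m + 1 ≤ m) := by omega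
        simp only [h1, if_false, if_pos rfl, le_refl, if_true]
        have h2 : m + 1 - 1 = m := by omega
        rw [h2]
        simp only [Nat.le_refl, if_pos]
        rw [hrec (m+1) j (by omega) hn hj]
        rcases Nat.eq_zero_or_pos j with rfl | hjpos
        · simp [hP, h2]
        · have : j ≠ 0 := by omega
          simp [hP, this, h2]
      · have h1 : ¬ (n ≤ m) := by omega
        have h2 : ¬ (n ≤ m + 1) := by omega
        simp [h1, h2, if_neg (by omega : n ≠ m + 1)]
  have := key (N+1) (le_refl _)
  apply tnn_congr _ this
  intro n j hn hj
  simp [hn]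

/-- Total nonnegativity restricted to minors with consecutive rows. -/
def ConsTNN (N : ℕ) (r : ℕ → ℕ → ℝ) : Prop :=
  ∀ (m a : ℕ) (g : Fin m → ℕ), StrictMono g → a + m ≤ N + 1 → (∀ i, g i ≤ N) →
    0 ≤ (Matrix.of fun (i j : Fin m) => r (a + (i : ℕ)) (g j)).det

lemma tnn_consTNN {N : ℕ} {r : ℕ → ℕ → ℝ} (h : TotallyNonneg N r) : ConsTNN N r := by
  intro m a g hg ham hgN
  apply h m (fun i => a + (i : ℕ)) g _ hg _ hgN
  · intro i j hij
    simpa using (Fin.lt_iff_val_lt_val.mp hij)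
  · intro i
    have := i.isLt
    show a + (i : ℕ) ≤ N
    omega

lemma consTNN_entry {N : ℕ} {r : ℕ → ℕ → ℝ} (h : ConsTNN N r)
    {n j : ℕ} (hn : n ≤ N) (hj : j ≤ N) : 0 ≤ r n j := by
  have := h 1 n (fun _ => j) (fun a b hab => absurd hab (by omega))
    (by omega) (fun _ => hj)
  simpa [Matrix.det_fin_one] using this

lemma consTNN_2x2 {N : ℕ} {r : ℕ → ℕ → ℝ} (h : ConsTNN N r)
    {n j0 j1 : ℕ} (hn : 1 ≤ n) (hnN : n ≤ N) (hj : j0 < j1) (hj1 : j1 ≤ N) :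
    0 ≤ r (n-1) j0 * r n j1 - r (n-1) j1 * r n j0 := by
  have hsm : StrictMono (fun i : Fin 2 => if i = 0 then j0 else j1) := by
    intro a b hab
    have ha0 : a = 0 := by omega
    have hb1 : b = 1 := by omega
    subst ha0; subst hb1
    simpa using hj
  have := h 2 (n-1) (fun i : Fin 2 => if i = 0 then j0 else j1) hsm
    (by omega) (by intro i; split <;> omega)
  rw [Matrix.det_fin_two] at this
  simp only [Matrix.of_apply, Fin.val_zero, Fin.val_one, Nat.add_zero] at this
  rw [show n - 1 + 1 = n by omega] at this
  simpa using this

noncomputable def peelC (r : ℕ → ℕ → ℝ) (n : ℕ) : ℝ :=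
  if r (n-1) 0 = 0 then 0 else r n 0 / r (n-1) 0

noncomputable def peelR (r : ℕ → ℕ → ℝ) (n j : ℕ) : ℝ :=
  r (n+1) (j+1) - peelC r (n+1) * r n (j+1)

lemma zeroprop {N : ℕ} {r : ℕ → ℕ → ℝ} (h : ConsTNN N r)
    (hdiag : ∀ n ≤ N, r n n = 1)
    {n : ℕ} (hn : 1 ≤ n) (hnN : n ≤ N) (h0 : r (n-1) 0 = 0) : r n 0 = 0 := by
  rcases eq_or_lt_of_le hn with h1 | h1
  · exfalso
    have : r 0 0 = 1 := hdiag 0 (by omega)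
    rw [show n - 1 = 0 by omega] at h0
    rw [h0] at this
    norm_num at this
  · -- n ≥ 2
    have h2 := consTNN_2x2 h hn hnN (show (0:ℕ) < n - 1 by omega) (by omega)
    rw [h0, hdiag (n-1) (by omega)] at h2
    have h3 := consTNN_entry h hnN (show (0:ℕ) ≤ N by omega)
    nlinarith

lemma peelC_key {N : ℕ} {r : ℕ → ℕ → ℝ} (h : ConsTNN N r)
    (hdiag : ∀ n ≤ N, r n n = 1)
    {n : ℕ} (hn : 1 ≤ n) (hnN : n ≤ N) : r n 0 = peelC r n * r (n-1) 0 := by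
  rw [peelC]
  by_cases h0 : r (n-1) 0 = 0
  · rw [if_pos h0, h0, mul_zero]
    exact zeroprop h hdiag hn hnN h0
  · rw [if_neg h0]
    field_simp

lemma peelC_nonneg {N : ℕ} {r : ℕ → ℕ → ℝ} (h : ConsTNN N r)
    {n : ℕ} (hn : 1 ≤ n) (hnN : n ≤ N) : 0 ≤ peelC r n := by
  rw [peelC]
  split
  · exact le_refl 0
  · exact div_nonneg (consTNN_entry h hnN (by omega))
      (consTNN_entry h (by omega) (by omega))

lemma peel_consTNN {N : ℕ} {r : ℕ → ℕ → ℝ} (h : ConsTNN (N+1) r)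
    (hdiag : ∀ n ≤ N + 1, r n n = 1) :
    ConsTNN N (peelR r) := by
  intro m a g hg ham hgN
  by_cases hA : r a 0 = 0
  · -- all the c's vanish
    have hz : ∀ i, i ≤ m → r (a + i) 0 = 0 := by
      intro i hi
      induction i with
      | zero => simpa using hA
      | succ i ih =>
        have h1 := ih (by omega)
        have := zeroprop h hdiag (show 1 ≤ a + i + 1 by omega)
          (show a + i + 1 ≤ N + 1 by omega)
          (by rw [show a + i + 1 - 1 = a + i from rfl]; exact h1)
        exact this
    have hM : (Matrix.of fun (i j : Fin m) => peelR r (a + (i:ℕ)) (g j)) =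
        Matrix.of fun (i j : Fin m) => r (a + 1 + (i:ℕ)) (g j + 1) := by
      ext i j
      have hc0 : peelC r (a + (i:ℕ) + 1) = 0 := by
        rw [peelC, if_pos]
        rw [show a + (i:ℕ) + 1 - 1 = a + (i:ℕ) from rfl]
        exact hz i (by omega)
      simp only [Matrix.of_apply, peelR, hc0, zero_mul, sub_zero]
      congr 1
      omega
    rw [hM]
    apply h m (a+1) (fun j => g j + 1)
    · intro x y hxy
      have := hg hxy
      show g x + 1 < g y + 1
      omega
    · omega
    · intro i
      have := hgN i
      omega
  · -- r a 0 > 0 : use the bordered determinant identity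
    have hApos : 0 < r a 0 :=
      lt_of_le_of_ne (consTNN_entry h (by omega) (by omega)) (Ne.symm hA)
    match m with
    | 0 => simp [Matrix.det_isEmpty]
    | m + 1 =>
      set cols' : Fin (m+2) → ℕ := Fin.cases 0 (fun j => g j + 1) with hcols
      have hcsm : StrictMono cols' := by
        intro i j hij
        rcases Fin.eq_zero_or_eq_succ j with rfl | ⟨j', rfl⟩
        · exact absurd hij (by simp)
        · rcases Fin.eq_zero_or_eq_succ i with rfl | ⟨i', rfl⟩
          · simp [hcols]
          · have hij' : i' < j' := by
              rwa [Fin.succ_lt_succ_iff] at hij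
            simp only [hcols, Fin.cases_succ]
            have := hg hij'
            omega
      set D : Matrix (Fin (m+2)) (Fin (m+2)) ℝ :=
        Matrix.of (fun (i j : Fin (m+2)) => r (a + (i:ℕ)) (cols' j)) with hD
      have hDdet : 0 ≤ D.det := by
        apply h (m+2) a cols' hcsm (by omega)
        intro i
        rcases Fin.eq_zero_or_eq_succ i with rfl | ⟨i', rfl⟩
        · simp [hcols]
        · simp only [hcols, Fin.cases_succ]
          have := hgN i'
          omega
      set T : Matrix (Fin (m+2)) (Fin (m+2)) ℝ :=
        Matrix.of (fun (i k : Fin (m+2)) =>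
          if i = k then 1 else if (k:ℕ) + 1 = (i:ℕ) then -(peelC r (a + (i:ℕ))) else 0) with hT
      have hTdet : T.det = 1 := by
        rw [Matrix.det_of_lowerTriangular T]
        · apply Finset.prod_eq_one
          intro i _
          simp [hT]
        · intro i k hik
          have h1 : i ≠ k := by
            intro hh
            rw [hh] at hik
            exact absurd rfl (ne_of_lt hik)
          have h2 : (k:ℕ) + 1 ≠ (i:ℕ) := by
            have : (i:ℕ) < (k:ℕ) := hik
            omega
          simp [hT, h1, h2]
      have hmul : ∀ (i : Fin (m+1)) (j : Fin (m+2)),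
          (T * D) i.succ j = D i.succ j - peelC r (a + (i:ℕ) + 1) * D i.castSucc j := by
        intro i j
        rw [Matrix.mul_apply]
        rw [Finset.sum_eq_add_of_mem i.succ i.castSucc (Finset.mem_univ _) (Finset.mem_univ _)]
        · have hne : i.succ ≠ i.castSucc := (Fin.castSucc_lt_succ (i := i)).ne'
          have hco : (i.castSucc : ℕ) + 1 = (i.succ : ℕ) := by
            rw [Fin.coe_castSucc, Fin.val_succ]
          have hiv : a + (i.succ : ℕ) = a + (i:ℕ) + 1 := by
            rw [Fin.val_succ]; omega
          simp [hT, hne, hco, hiv]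
          ring
        · exact (Fin.castSucc_lt_succ (i := i)).ne'
        · intro k _ hk
          have h1 : i.succ ≠ k := fun hh => hk.1 hh.symm
          have h2 : (k:ℕ) + 1 ≠ ((i.succ:ℕ)) := by
            intro hh
            apply hk.2
            apply Fin.ext
            rw [Fin.coe_castSucc]
            rw [Fin.val_succ] at hh
            omega
          have h3 : (k:ℕ) ≠ (i:ℕ) := by
            rw [Fin.val_succ] at h2
            omega
          simp [hT, h1, h2, h3]
      have hmul0 : ∀ j : Fin (m+2), (T * D) 0 j = D 0 j := by
        intro j
        rw [Matrix.mul_apply]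
        rw [Finset.sum_eq_single 0]
        · simp [hT]
        · intro k _ hk
          have h1 : (0 : Fin (m+2)) ≠ k := fun hh => hk hh.symm
          have h2 : (k:ℕ) + 1 ≠ ((0 : Fin (m+2)):ℕ) := by simp
          simp [hT, h1, h2]
        · intro hh
          exact absurd (Finset.mem_univ _) hh
      -- column zero of T*D
      have hcol0 : ∀ i : Fin (m+1), (T * D) i.succ 0 = 0 := by
        intro i
        rw [hmul i 0]
        have hD1 : D i.succ 0 = r (a + (i:ℕ) + 1) 0 := by
          simp only [hD, Matrix.of_apply, hcols, Fin.cases_zero]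
          rw [Fin.val_succ, show a + ((i:ℕ)+1) = a + (i:ℕ) + 1 from (Nat.add_assoc a _ 1).symm]
        have hD2 : D i.castSucc 0 = r (a + (i:ℕ)) 0 := by
          simp only [hD, Matrix.of_apply, hcols, Fin.cases_zero, Fin.coe_castSucc]
        rw [hD1, hD2]
        have := peelC_key h hdiag (show 1 ≤ a + (i:ℕ) + 1 by omega)
          (show a + (i:ℕ) + 1 ≤ N + 1 by have := i.isLt; omega)
        rw [show a + (i:ℕ) + 1 - 1 = a + (i:ℕ) from rfl] at this
        rw [this]
        ring
      -- the submatrix identity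
      have hsub : ((T * D).submatrix (Fin.succAbove 0) Fin.succ) =
          Matrix.of (fun (i j : Fin (m+1)) => peelR r (a + (i:ℕ)) (g j)) := by
        ext i j
        rw [Matrix.submatrix_apply, Fin.succAbove_zero, hmul i j.succ]
        have hD1 : D i.succ j.succ = r (a + (i:ℕ) + 1) (g j + 1) := by
          simp only [hD, Matrix.of_apply, hcols, Fin.cases_succ]
          rw [Fin.val_succ, show a + ((i:ℕ)+1) = a + (i:ℕ) + 1 from (Nat.add_assoc a _ 1).symm]
        have hD2 : D i.castSucc j.succ = r (a + (i:ℕ)) (g j + 1) := by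
          simp only [hD, Matrix.of_apply, hcols, Fin.cases_succ, Fin.coe_castSucc]
        rw [hD1, hD2]
        simp [peelR]
      -- expand along column 0
      have hexp : (T * D).det = r a 0 *
          (Matrix.of fun (i j : Fin (m+1)) => peelR r (a + (i:ℕ)) (g j)).det := by
        rw [Matrix.det_succ_column_zero]
        rw [Finset.sum_eq_single 0]
        · rw [hmul0 0]
          have hD00 : D 0 0 = r a 0 := by
            simp [hD, hcols]
          have : (0 : Fin (m+2)).succAbove = Fin.succAbove 0 := rfl
          rw [this, hsub, hD00]
          simp
        · intro b _ hb
          rcases Fin.eq_zero_or_eq_succ b with rfl | ⟨b', rfl⟩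
          · exact absurd rfl hb
          · rw [hcol0 b']
            ring
        · intro hh
          exact absurd (Finset.mem_univ _) hh
      have hTD : (T * D).det = D.det := by
        rw [Matrix.det_mul, hTdet, one_mul]
      rw [hTD] at hexp
      have h9 : 0 ≤ r a 0 * (Matrix.of fun (i j : Fin (m+1)) =>
          peelR r (a + (i:ℕ)) (g j)).det := by
        rw [← hexp]; exact hDdet
      nlinarith [h9, hApos]

lemma rowPoly_natDegree_le (r : ℕ → ℕ → ℝ) (n : ℕ) : (RowPoly r n).natDegree ≤ n := by
  apply Polynomial.natDegree_sum_le_of_forall_le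
  intro k hk
  rw [Finset.mem_range] at hk
  apply le_trans (Polynomial.natDegree_C_mul_le _ _)
  rw [Polynomial.natDegree_X_pow]
  omega

lemma rowPoly_monic {r : ℕ → ℕ → ℝ} {n : ℕ} (h1 : r n n = 1) : (RowPoly r n).Monic := by
  apply Polynomial.monic_of_natDegree_le_of_coeff_eq_one n (rowPoly_natDegree_le r n)
  rw [rowPoly_coeff, if_pos (le_refl n), h1]

lemma rowPoly_zero_eq_one {r : ℕ → ℕ → ℝ} (h : r 0 0 = 1) : RowPoly r 0 = 1 := by
  rw [RowPoly]
  simp [h]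

lemma rowPoly_peel {N : ℕ} {r : ℕ → ℕ → ℝ} (h : ConsTNN N r) (hdiag : ∀ n ≤ N, r n n = 1)
    (htri : ∀ n k, n < k → r n k = 0) {n : ℕ} (hn : n + 1 ≤ N) :
    RowPoly r (n+1) = X * RowPoly (peelR r) n + C (peelC r (n+1)) * RowPoly r n := by
  ext j
  rw [Polynomial.coeff_add, Polynomial.coeff_C_mul, rowPoly_coeff, rowPoly_coeff]
  match j with
  | 0 =>
    have hx : (X * RowPoly (peelR r) n).coeff 0 = 0 := by
      rw [Polynomial.mul_coeff_zero, Polynomial.coeff_X_zero, zero_mul]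
    rw [hx, zero_add, if_pos (by omega : (0:ℕ) ≤ n+1), if_pos (by omega : (0:ℕ) ≤ n)]
    have := peelC_key h hdiag (show 1 ≤ n + 1 by omega) hn
    rw [show n + 1 - 1 = n from rfl] at this
    exact this
  | j + 1 =>
    rw [Polynomial.coeff_X_mul, rowPoly_coeff]
    by_cases hj : j + 1 ≤ n + 1
    · rw [if_pos hj, if_pos (by omega : j ≤ n)]
      have hdef : peelR r n j = r (n+1) (j+1) - peelC r (n+1) * r n (j+1) := rfl
      by_cases hj2 : j + 1 ≤ n
      · rw [if_pos hj2, hdef]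
        ring
      · rw [if_neg hj2, hdef, htri n (j+1) (by omega)]
        ring
    · rw [if_neg hj, if_neg (by omega : ¬ j ≤ n), if_neg (by omega : ¬ j + 1 ≤ n)]
      ring

lemma consTNN_resolvable : ∀ N : ℕ, ∀ r : ℕ → ℕ → ℝ,
    (∀ n k, n < k → r n k = 0) → (∀ n ≤ N, r n n = 1) → ConsTNN N r → Resolvable N r := by
  intro N
  induction N with
  | zero =>
    intro r htri hdiag _
    refine ⟨0, fun n _ => X ^ n, ?_, ?_, ?_, ?_⟩
    · intro n k _ hn
      omega
    · intro n hn
      interval_cases n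
      constructor
      · show (X:ℝ[X]) ^ 0 = RowPoly r 0
        rw [rowPoly_zero_eq_one (hdiag 0 (le_refl 0)), pow_zero]
      · rfl
    · intro n k hk hn
      interval_cases n
      interval_cases k
      exact ⟨Polynomial.monic_X_pow _, dvd_rfl⟩
    · intro n k _ hn
      omega
  | succ N ih =>
    intro r htri hdiag hct
    have htri_rt : ∀ n k, n < k → peelR r n k = 0 := by
      intro n k hnk
      rw [peelR, htri (n+1) (k+1) (by omega), htri n (k+1) (by omega)]
      ring
    have hdiag_rt : ∀ n ≤ N, peelR r n n = 1 := by
      intro n hn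
      rw [peelR, htri n (n+1) (by omega), hdiag (n+1) (by omega)]
      ring
    have hct_rt : ConsTNN N (peelR r) := peel_consTNN hct hdiag
    obtain ⟨lam', Rp', h1, h2, h3, h4⟩ := ih (peelR r) htri_rt hdiag_rt hct_rt
    refine ⟨fun n k => if k = 0 then peelC r (n+1) else lam' (n-1) (k-1),
      fun n k => if k = 0 then RowPoly r n else X * Rp' (n-1) (k-1), ?_, ?_, ?_, ?_⟩
    · intro n k hk hn
      dsimp only
      by_cases hk0 : k = 0
      · rw [if_pos hk0]
        exact peelC_nonneg hct (by omega) (by omega)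
      · rw [if_neg hk0]
        exact h1 (n-1) (k-1) (by omega) (by omega)
    · intro n hn
      constructor
      · show (if (0:ℕ) = 0 then RowPoly r n else X * Rp' (n - 1) (0 - 1)) = RowPoly r n
        rw [if_pos rfl]
      · show (if n = 0 then RowPoly r n else X * Rp' (n - 1) (n - 1)) = X ^ n
        by_cases hn0 : n = 0
        · subst hn0
          rw [if_pos rfl, pow_zero, rowPoly_zero_eq_one (hdiag 0 (by omega))]
        · rw [if_neg hn0]
          rw [(h2 (n-1) (by omega)).2]
          rw [← pow_succ']
          congr 1
          omega
    · intro n k hk hn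
      dsimp only
      by_cases hk0 : k = 0
      · subst hk0
        rw [if_pos rfl, pow_zero]
        refine ⟨rowPoly_monic (hdiag n hn), one_dvd _⟩
      · rw [if_neg hk0]
        obtain ⟨hm, hd⟩ := h3 (n-1) (k-1) (by omega) (by omega)
        constructor
        · exact Polynomial.monic_X.mul hm
        · have : (X:ℝ[X]) ^ k = X * X ^ (k-1) := by
            rw [← pow_succ']
            congr 1
            omega
          rw [this]
          exact mul_dvd_mul_left X hd
    · intro n k hk hn
      dsimp only
      by_cases hk0 : k = 0
      · subst hk0
        simp only [if_pos rfl, if_neg (one_ne_zero : (1:ℕ) ≠ 0)]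
        rw [show (0:ℕ) + 1 - 1 = 0 from rfl, show n + 1 - 1 = n from rfl]
        rw [(h2 n (by omega)).1]
        exact rowPoly_peel hct hdiag htri hn
      · rw [if_neg hk0, if_neg (by omega : k + 1 ≠ 0), if_neg hk0]
        rw [show n + 1 - 1 = n from rfl, show k + 1 - 1 = k from rfl]
        have hrec := h4 (n-1) (k-1) (by omega) (by omega)
        rw [show n - 1 + 1 = n by omega] at hrec
        rw [show k - 1 + 1 = k by omega] at hrec
        rw [hrec, if_neg hk0]
        ring

lemma consTNN_operatorForm_aux : ∀ N : ℕ, ∀ r : ℕ → ℕ → ℝ,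
    (∀ n k, n < k → r n k = 0) → (∀ n ≤ N, r n n = 1) → ConsTNN N r →
    ∃ (α : ℕ → ℕ → ℝ) (Q : ℕ → ℕ → ℝ[X]),
      (∀ i k, 0 ≤ α i k) ∧
      (∀ k, Q 0 k = X ^ k) ∧
      (∀ m k, Q (m + 1) k = Q m (k + 1) + C (α (m + 1) k) * Q m k) ∧
      (∀ n ≤ N, RowPoly r n = Q n 0) := by
  intro N
  induction N with
  | zero =>
    intro r htri hdiag _
    refine ⟨0, fun m k => X ^ (m + k), fun i k => le_refl 0, fun k => by simp, ?_, ?_⟩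
    · intro m k
      simp only [Pi.zero_apply, map_zero, zero_mul, add_zero]
      congr 1
      omega
    · intro n hn
      interval_cases n
      rw [rowPoly_zero_eq_one (hdiag 0 (le_refl 0))]
      simp
  | succ N ih =>
    intro r htri hdiag hct
    have htri_rt : ∀ n k, n < k → peelR r n k = 0 := by
      intro n k hnk
      rw [peelR, htri (n+1) (k+1) (by omega), htri n (k+1) (by omega)]
      ring
    have hdiag_rt : ∀ n ≤ N, peelR r n n = 1 := by
      intro n hn
      rw [peelR, htri n (n+1) (by omega), hdiag (n+1) (by omega)]
      ring
    have hct_rt : ConsTNN N (peelR r) := peel_consTNN hct hdiag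
    obtain ⟨α', Q', hα', hQ'0, hQ'rec, hQ'row⟩ := ih (peelR r) htri_rt hdiag_rt hct_rt
    set α : ℕ → ℕ → ℝ := fun i k =>
      if k = 0 then (if 1 ≤ i ∧ i ≤ N + 1 then peelC r i else 0) else α' i (k-1) with hα
    set Q : ℕ → ℕ → ℝ[X] := fun m => m.rec (motive := fun _ => ℕ → ℝ[X])
      (fun k => (X:ℝ[X]) ^ k)
      (fun m Qm => fun k => Qm (k+1) + C (α (m+1) k) * Qm k) with hQ
    have hQ0 : ∀ k, Q 0 k = X ^ k := fun _ => rfl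
    have hQs : ∀ m k, Q (m + 1) k = Q m (k + 1) + C (α (m + 1) k) * Q m k := fun _ _ => rfl
    have hshift : ∀ m k, Q m (k + 1) = X * Q' m k := by
      intro m
      induction m with
      | zero =>
        intro k
        rw [hQ0, hQ'0, pow_succ']
      | succ m ihm =>
        intro k
        rw [hQs, ihm (k+1), ihm k, hQ'rec m k]
        have hα1 : α (m + 1) (k + 1) = α' (m + 1) k := by
          rw [hα]
          simp
        rw [hα1]
        ring
    refine ⟨α, Q, ?_, hQ0, hQs, ?_⟩
    · intro i k
      rw [hα]
      dsimp only
      by_cases hk0 : k = 0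
      · rw [if_pos hk0]
        split
        · next hh => exact peelC_nonneg hct hh.1 hh.2
        · exact le_refl 0
      · rw [if_neg hk0]
        exact hα' i (k-1)
    · intro n
      induction n with
      | zero =>
        intro _
        rw [rowPoly_zero_eq_one (hdiag 0 (by omega)), hQ0, pow_zero]
      | succ n ihn =>
        intro hn
        rw [hQs, hshift n 0, ← ihn (by omega), ← hQ'row n (by omega)]
        have hα0 : α (n + 1) 0 = peelC r (n+1) := by
          rw [hα]
          have hcond : (1 ≤ n + 1 ∧ n + 1 ≤ N + 1) := ⟨by omega, by omega⟩
          simp [hcond]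
        rw [hα0]
        exact rowPoly_peel hct hdiag htri hn

lemma tnn_base {r : ℕ → ℕ → ℝ} (h : r 0 0 = 1) : TotallyNonneg 0 r := by
  intro m rows cols hr hc hrN hcN
  match m with
  | 0 => simp [Matrix.det_isEmpty]
  | 1 =>
    rw [Matrix.det_fin_one]
    have h1 : rows 0 = 0 := Nat.le_zero.mp (hrN 0)
    have h2 : cols 0 = 0 := Nat.le_zero.mp (hcN 0)
    simp [h1, h2, h]
  | p + 2 =>
    exfalso
    have h01 : (0 : Fin (p+2)) < 1 := by
      rw [Fin.lt_def]
      norm_num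
    have := hr h01
    have := hrN 0
    have := hrN 1
    omega

lemma resolv_deg {N : ℕ} {r : ℕ → ℕ → ℝ} {lam : ℕ → ℕ → ℝ} {Rp : ℕ → ℕ → ℝ[X]}
    (h2 : ∀ n ≤ N, Rp n 0 = RowPoly r n ∧ Rp n n = X ^ n)
    (h4 : ∀ n k, k ≤ n → n + 1 ≤ N → Rp (n + 1) k = Rp (n + 1) (k + 1) + C (lam n k) * Rp n k) :
    ∀ n ≤ N, ∀ k ≤ n, (Rp n k).natDegree = n := by
  intro n
  induction n with
  | zero =>
    intro hn k hk
    interval_cases k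
    rw [(h2 0 hn).2]
    exact Polynomial.natDegree_X_pow 0
  | succ n ihn =>
    intro hn k hk
    -- downward induction via the gap d = n + 1 - k
    have aux : ∀ d k, k + d = n + 1 → (Rp (n+1) k).natDegree = n + 1 := by
      intro d
      induction d with
      | zero =>
        intro k hkd
        have : k = n + 1 := by omega
        subst this
        rw [(h2 (n+1) hn).2]
        exact Polynomial.natDegree_X_pow (n+1)
      | succ d ihd =>
        intro k hkd
        rw [h4 n k (by omega) hn]
        have hdeg1 : (Rp (n+1) (k+1)).natDegree = n + 1 := ihd (k+1) (by omega)
        have hdeg2 : (C (lam n k) * Rp n k).natDegree < n + 1 := by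
          apply lt_of_le_of_lt (Polynomial.natDegree_C_mul_le _ _)
          rw [ihn (by omega) k (by omega)]
          omega
        rw [Polynomial.natDegree_add_eq_left_of_natDegree_lt (by omega : (C (lam n k) * Rp n k).natDegree < (Rp (n+1) (k+1)).natDegree)]
        exact hdeg1
    exact aux (n + 1 - k) k (by omega)

lemma resolvable_tnn : ∀ N : ℕ, ∀ r : ℕ → ℕ → ℝ,
    (∀ n k, n < k → r n k = 0) → (∀ n ≤ N, r n n = 1) → Resolvable N r → TotallyNonneg N r := by
  intro N
  induction N with
  | zero =>
    intro r htri hdiag _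
    exact tnn_base (hdiag 0 (le_refl 0))
  | succ N ih =>
    intro r htri hdiag hres
    obtain ⟨lam, Rp, h1, h2, h3, h4⟩ := hres
    have hdeg := resolv_deg h2 h4
    set rt : ℕ → ℕ → ℝ := fun n j => if j ≤ n then (Rp (n+1) 1).coeff (j+1) else 0 with hrt
    have hXdvd : ∀ n k, k + 1 ≤ n + 1 → n + 1 ≤ N + 1 → X ∣ Rp (n+1) (k+1) := by
      intro n k hk hn
      exact dvd_trans (dvd_pow_self X (Nat.succ_ne_zero k)) (h3 (n+1) (k+1) hk hn).2
    have hXmul : ∀ n k, k + 1 ≤ n + 1 → n + 1 ≤ N + 1 →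
        X * (Rp (n+1) (k+1)).divX = Rp (n+1) (k+1) := by
      intro n k hk hn
      have h0 := Polynomial.X_dvd_iff.mp (hXdvd n k hk hn)
      have := Polynomial.X_mul_divX_add (Rp (n+1) (k+1))
      rw [h0, map_zero, add_zero] at this
      exact this
    -- rt is triangular with unit diagonal
    have htri_rt : ∀ n k, n < k → rt n k = 0 := by
      intro n k hnk
      rw [hrt]
      simp [Nat.not_le.mpr hnk]
    have hdiag_rt : ∀ n ≤ N, rt n n = 1 := by
      intro n hn
      rw [hrt]
      dsimp only
      rw [if_pos (le_refl n)]
      have hmon := (h3 (n+1) 1 (by omega) (by omega)).1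
      have hdg := hdeg (n+1) (by omega) 1 (by omega)
      have := hmon.coeff_natDegree
      rw [hdg] at this
      exact this
    -- X * RowPoly rt n = Rp (n+1) 1 for n ≤ N
    have hXrow : ∀ n ≤ N, X * RowPoly rt n = Rp (n+1) 1 := by
      intro n hn
      ext j
      match j with
      | 0 =>
        rw [Polynomial.mul_coeff_zero, Polynomial.coeff_X_zero, zero_mul]
        exact (Polynomial.X_dvd_iff.mp (hXdvd n 0 (by omega) (by omega))).symm
      | j + 1 =>
        rw [Polynomial.coeff_X_mul, rowPoly_coeff]
        by_cases hj : j ≤ n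
        · rw [if_pos hj, hrt]
          dsimp only
          rw [if_pos hj]
        · rw [if_neg hj]
          symm
          apply Polynomial.coeff_eq_zero_of_natDegree_lt
          rw [hdeg (n+1) (by omega) 1 (by omega)]
          omega
    -- rt is resolvable at level N
    have hres_rt : Resolvable N rt := by
      refine ⟨fun n k => lam (n+1) (k+1), fun n k => (Rp (n+1) (k+1)).divX, ?_, ?_, ?_, ?_⟩
      · intro n k hk hn
        exact h1 (n+1) (k+1) (by omega) (by omega)
      · intro n hn
        constructor
        · apply mul_left_cancel₀ (Polynomial.X_ne_zero : (X:ℝ[X]) ≠ 0)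
          rw [hXmul n 0 (by omega) (by omega), hXrow n hn]
        · apply mul_left_cancel₀ (Polynomial.X_ne_zero : (X:ℝ[X]) ≠ 0)
          rw [hXmul n n (by omega) (by omega), (h2 (n+1) (by omega)).2, ← pow_succ']
      · intro n k hk hn
        constructor
        · apply Polynomial.Monic.of_mul_monic_left (Polynomial.monic_X)
          rw [hXmul n k (by omega) (by omega)]
          exact (h3 (n+1) (k+1) (by omega) (by omega)).1
        · rw [← mul_dvd_mul_iff_left (Polynomial.X_ne_zero : (X:ℝ[X]) ≠ 0),
            hXmul n k (by omega) (by omega), ← pow_succ']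
          exact (h3 (n+1) (k+1) (by omega) (by omega)).2
      · intro n k hk hn
        apply mul_left_cancel₀ (Polynomial.X_ne_zero : (X:ℝ[X]) ≠ 0)
        rw [mul_add, hXmul (n+1) k (by omega) (by omega), hXmul (n+1) (k+1) (by omega) (by omega)]
        rw [show X * (C (lam (n+1) (k+1)) * (Rp (n+1) (k+1)).divX) =
          C (lam (n+1) (k+1)) * (X * (Rp (n+1) (k+1)).divX) by ring]
        rw [hXmul n k (by omega) (by omega)]
        exact h4 (n+1) (k+1) (by omega) (by omega)
    have htnn_rt : TotallyNonneg N rt := ih rt htri_rt hdiag_rt hres_rt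
    -- now step up
    apply tnn_step htnn_rt (c := fun n => lam (n-1) 0)
    · intro n hn1 hn2
      exact h1 (n-1) 0 (by omega) (by omega)
    · exact hdiag 0 (by omega)
    · intro j hj
      exact htri 0 j (by omega)
    · intro n j hn1 hn2 hj
      have hrec := h4 (n-1) 0 (by omega) (by omega)
      rw [show n - 1 + 1 = n by omega] at hrec
      have hcoeff := congrArg (fun p => Polynomial.coeff p j) hrec
      rw [(h2 n (by omega)).1, (h2 (n-1) (by omega)).1] at hcoeff
      rw [Polynomial.coeff_add, Polynomial.coeff_C_mul, rowPoly_coeff, rowPoly_coeff] at hcoeff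
      have hL : (if j ≤ n then r n j else 0) = r n j := by
        by_cases hjn : j ≤ n
        · rw [if_pos hjn]
        · rw [if_neg hjn, htri n j (by omega)]
      have hR : lam (n-1) 0 * (if j ≤ n - 1 then r (n-1) j else 0) = lam (n-1) 0 * r (n-1) j := by
        by_cases hjn : j ≤ n - 1
        · rw [if_pos hjn]
        · rw [if_neg hjn, htri (n-1) j (by omega), mul_zero]
      rw [hL, hR] at hcoeff
      rw [hcoeff]
      congr 1
      match j with
      | 0 =>
        rw [if_pos rfl]
        exact Polynomial.X_dvd_iff.mp (hXdvd (n-1) 0 (by omega) (by omega)) |>.symm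
          |> (fun h => by rw [show n - 1 + 1 = n by omega] at h; exact h.symm)
      | j + 1 =>
        rw [if_neg (Nat.succ_ne_zero j), hrt]
        dsimp only
        rw [show j + 1 - 1 = j from rfl]
        by_cases hjn : j ≤ n - 1
        · rw [if_pos hjn, show n - 1 + 1 = n by omega]
        · rw [if_neg hjn]
          apply Polynomial.coeff_eq_zero_of_natDegree_lt
          rw [hdeg n (by omega) 1 (by omega)]
          omega

lemma opform_deg {α : ℕ → ℕ → ℝ} {Q : ℕ → ℕ → ℝ[X]}
    (hQ0 : ∀ k, Q 0 k = X ^ k)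
    (hQs : ∀ m k, Q (m + 1) k = Q m (k + 1) + C (α (m + 1) k) * Q m k) :
    ∀ m k, (Q m k).Monic ∧ (Q m k).natDegree = m + k := by
  intro m
  induction m with
  | zero =>
    intro k
    rw [hQ0]
    exact ⟨Polynomial.monic_X_pow k, by rw [Polynomial.natDegree_X_pow]; omega⟩
  | succ m ihm =>
    intro k
    obtain ⟨hm1, hd1⟩ := ihm (k+1)
    obtain ⟨hm2, hd2⟩ := ihm k
    have hlt : (C (α (m+1) k) * Q m k).natDegree < (Q m (k+1)).natDegree := by
      apply lt_of_le_of_lt (Polynomial.natDegree_C_mul_le _ _)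
      omega
    constructor
    · rw [hQs]
      apply Polynomial.monic_of_natDegree_le_of_coeff_eq_one (m + 1 + k)
      · apply le_trans (Polynomial.natDegree_add_le _ _)
        apply max_le
        · omega
        · apply le_trans (Polynomial.natDegree_C_mul_le _ _)
          omega
      · rw [Polynomial.coeff_add]
        have e1 : (Q m (k+1)).coeff (m + 1 + k) = 1 := by
          have := hm1.coeff_natDegree
          rw [hd1] at this
          rw [show m + 1 + k = m + (k + 1) by omega]
          exact this
        have e2 : (C (α (m+1) k) * Q m k).coeff (m + 1 + k) = 0 := by
          apply Polynomial.coeff_eq_zero_of_natDegree_lt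
          omega
        rw [e1, e2, add_zero]
    · rw [hQs, Polynomial.natDegree_add_eq_left_of_natDegree_lt hlt, hd1]
      omega

lemma opform_coeff0 {α : ℕ → ℕ → ℝ} {Q : ℕ → ℕ → ℝ[X]}
    (hQ0 : ∀ k, Q 0 k = X ^ k)
    (hQs : ∀ m k, Q (m + 1) k = Q m (k + 1) + C (α (m + 1) k) * Q m k) :
    ∀ m k, (Q m (k+1)).coeff 0 = 0 := by
  intro m
  induction m with
  | zero =>
    intro k
    rw [hQ0, Polynomial.coeff_X_pow]
    simp
  | succ m ihm =>
    intro k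
    rw [hQs, Polynomial.coeff_add, Polynomial.coeff_C_mul, ihm (k+1), ihm k]
    ring

lemma operatorForm_tnn : ∀ N : ℕ, ∀ r : ℕ → ℕ → ℝ,
    (∀ n k, n < k → r n k = 0) → (∀ n ≤ N, r n n = 1) → OperatorForm N r → TotallyNonneg N r := by
  intro N
  induction N with
  | zero =>
    intro r htri hdiag _
    exact tnn_base (hdiag 0 (le_refl 0))
  | succ N ih =>
    intro r htri hdiag hof
    obtain ⟨α, Q, hα, hQ0, hQs, hQrow⟩ := hof
    have hdeg := opform_deg hQ0 hQs
    have hc0 := opform_coeff0 hQ0 hQs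
    set rt : ℕ → ℕ → ℝ := fun n j => if j ≤ n then (Q n 1).coeff (j+1) else 0 with hrt
    have hXmul : ∀ m k, X * (Q m (k+1)).divX = Q m (k+1) := by
      intro m k
      have := Polynomial.X_mul_divX_add (Q m (k+1))
      rw [hc0 m k, map_zero, add_zero] at this
      exact this
    have htri_rt : ∀ n k, n < k → rt n k = 0 := by
      intro n k hnk
      rw [hrt]
      simp [Nat.not_le.mpr hnk]
    have hdiag_rt : ∀ n ≤ N, rt n n = 1 := by
      intro n _
      rw [hrt]
      dsimp only
      rw [if_pos (le_refl n)]
      have := (hdeg n 1).1.coeff_natDegree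
      rw [(hdeg n 1).2] at this
      exact this
    have hXrow : ∀ n, X * RowPoly rt n = Q n 1 := by
      intro n
      ext j
      match j with
      | 0 =>
        rw [Polynomial.mul_coeff_zero, Polynomial.coeff_X_zero, zero_mul]
        exact (hc0 n 0).symm
      | j + 1 =>
        rw [Polynomial.coeff_X_mul, rowPoly_coeff]
        by_cases hj : j ≤ n
        · rw [if_pos hj, hrt]
          dsimp only
          rw [if_pos hj]
        · rw [if_neg hj]
          symm
          apply Polynomial.coeff_eq_zero_of_natDegree_lt
          rw [(hdeg n 1).2]
          omega
    have hof_rt : OperatorForm N rt := by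
      refine ⟨fun i k => α i (k+1), fun m k => (Q m (k+1)).divX, ?_, ?_, ?_, ?_⟩
      · intro i k hi hN
        exact hα i (k+1) hi (by omega)
      · intro k
        apply mul_left_cancel₀ (Polynomial.X_ne_zero : (X:ℝ[X]) ≠ 0)
        rw [hXmul 0 k, hQ0, ← pow_succ']
      · intro m k
        apply mul_left_cancel₀ (Polynomial.X_ne_zero : (X:ℝ[X]) ≠ 0)
        rw [mul_add, hXmul (m+1) k, hXmul m (k+1)]
        rw [show X * (C (α (m+1) (k+1)) * (Q m (k+1)).divX) =
          C (α (m+1) (k+1)) * (X * (Q m (k+1)).divX) by ring]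
        rw [hXmul m k]
        exact hQs m (k+1)
      · intro n hn
        apply mul_left_cancel₀ (Polynomial.X_ne_zero : (X:ℝ[X]) ≠ 0)
        rw [hXrow n, hXmul n 0]
    have htnn_rt : TotallyNonneg N rt := ih rt htri_rt hdiag_rt hof_rt
    apply tnn_step htnn_rt (c := fun n => α n 0)
    · intro n hn1 hn2
      exact hα n 0 hn1 hn2
    · exact hdiag 0 (by omega)
    · intro j hj
      exact htri 0 j (by omega)
    · intro n j hn1 hn2 hj
      have hrec := hQs (n-1) 0
      rw [show n - 1 + 1 = n by omega] at hrec
      have hcoeff := congrArg (fun p => Polynomial.coeff p j) hrec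
      rw [← hQrow n (by omega), ← hQrow (n-1) (by omega)] at hcoeff
      rw [Polynomial.coeff_add, Polynomial.coeff_C_mul, rowPoly_coeff, rowPoly_coeff] at hcoeff
      have hL : (if j ≤ n then r n j else 0) = r n j := by
        by_cases hjn : j ≤ n
        · rw [if_pos hjn]
        · rw [if_neg hjn, htri n j (by omega)]
      have hR : α n 0 * (if j ≤ n - 1 then r (n-1) j else 0) = α n 0 * r (n-1) j := by
        by_cases hjn : j ≤ n - 1
        · rw [if_pos hjn]
        · rw [if_neg hjn, htri (n-1) j (by omega), mul_zero]
      rw [hL, hR] at hcoeff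
      rw [hcoeff]
      congr 1
      match j with
      | 0 =>
        rw [if_pos rfl]
        exact hc0 (n-1) 0
      | j + 1 =>
        rw [if_neg (Nat.succ_ne_zero j), hrt]
        dsimp only
        rw [show j + 1 - 1 = j from rfl]
        by_cases hjn : j ≤ n - 1
        · rw [if_pos hjn]
        · rw [if_neg hjn]
          apply Polynomial.coeff_eq_zero_of_natDegree_lt
          rw [(hdeg (n-1) 1).2]
          omega


theorem stmt9 (N : ℕ) (r : ℕ → ℕ → ℝ)
    (htri : ∀ n k, n < k → r n k = 0) (hdiag : ∀ n ≤ N, r n n = 1) :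
    (Resolvable N r ↔ TotallyNonneg N r) ∧ (OperatorForm N r ↔ TotallyNonneg N r) := by
  constructor
  · constructor
    · exact fun h => resolvable_tnn N r htri hdiag h
    · exact fun h => consTNN_resolvable N r htri hdiag (tnn_consTNN h)
  · constructor
    · exact fun h => operatorForm_tnn N r htri hdiag h
    · intro h
      obtain ⟨α, Q, h1, h2, h3, h4⟩ := consTNN_operatorForm_aux N r htri hdiag (tnn_consTNN h)
      exact ⟨α, Q, fun i k _ _ => h1 i k, h2, h3, h4⟩
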